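/- Let H be a real Hilbert space with inner product a(·,·) and norm ‖·‖, W ⊆ H a closed subspace, and B: H × H → ℝ a map, linear in its second argument, satisfying the monotonicity B(u, u−v) − B(v, u−v) ≥ 0 and the Lipschitz-type bound |B(u,v) − B(w,v)| ≤ M ‖u − w‖ ‖v‖ for all u, v, w in a ball containing all quantities below, with constant M ≥ 0. Suppose u ∈ H and U ∈ W satisfy the Galerkin orthogonality a(u − U, v) + B(u, v) − B(U, v) = 0 for all v ∈ W. Then ‖u − U‖ ≤ (1 + M) · inf_{w ∈ W} ‖u − w‖. -/

import Mathlib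

theorem quasi_optimality
    {H : Type*} [NormedAddCommGroup H] [InnerProductSpace ℝ H] [CompleteSpace H]
    (W : Submodule ℝ H) (hW : IsClosed (W : Set H))
    (B : H → H → ℝ) (M : ℝ) (hM : 0 ≤ M)
    (hBlin : ∀ u : H, IsLinearMap ℝ (B u))
    (hBmono : ∀ u v : H, 0 ≤ B u (u - v) - B v (u - v))
    (hBLip : ∀ u v w : H, |B u v - B w v| ≤ M * ‖u - w‖ * ‖v‖)
    (u : H) (U : H) (hU : U ∈ W)
    (hGalerkin : ∀ v ∈ W, (inner ℝ (u - U) v : ℝ) + B u v - B U v = 0) :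
    ∀ w ∈ W, ‖u - U‖ ≤ (1 + M) * ‖u - w‖ := by
  intro w hw
  rcases eq_or_ne (u - U) 0 with h0 | h0
  · rw [h0, norm_zero]
    positivity
  have hpos : 0 < ‖u - U‖ := norm_pos_iff.mpr h0
  -- key: ‖u-U‖^2 ≤ (1+M) ‖u-w‖ ‖u-U‖
  have key : ‖u - U‖ ^ 2 ≤ (1 + M) * ‖u - w‖ * ‖u - U‖ := by
    have hsplit : (‖u - U‖ : ℝ) ^ 2 =
        (inner ℝ (u - U) (u - w) : ℝ) + inner ℝ (u - U) (w - U) := by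
      rw [← inner_add_right]
      have : (u - w) + (w - U) = u - U := by abel
      rw [this, real_inner_self_eq_norm_sq]
    have hG := hGalerkin (w - U) (W.sub_mem hw hU)
    have hinner2 : (inner ℝ (u - U) (w - U) : ℝ) = -(B u (w - U) - B U (w - U)) := by
      linarith
    have hBsplit : B u (w - U) - B U (w - U)
        = (B u (w - u) - B U (w - u)) + (B u (u - U) - B U (u - U)) := by
      have h1 : B u (w - U) = B u (w - u) + B u (u - U) := by
        rw [← (hBlin u).map_add]; congr 1; abel
      have h2 : B U (w - U) = B U (w - u) + B U (u - U) := by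
        rw [← (hBlin U).map_add]; congr 1; abel
      rw [h1, h2]; ring
    have hmono := hBmono u U
    have hLip := hBLip u (w - u) U
    have habs : -(B u (w - u) - B U (w - u)) ≤ M * ‖u - U‖ * ‖w - u‖ :=
      by have := abs_le.mp hLip; linarith
    have hnorm : ‖w - u‖ = ‖u - w‖ := by rw [← norm_neg]; congr 1; abel
    have hcs : (inner ℝ (u - U) (u - w) : ℝ) ≤ ‖u - U‖ * ‖u - w‖ :=
      real_inner_le_norm _ _
    have h2 : (inner ℝ (u - U) (w - U) : ℝ) ≤ M * ‖u - U‖ * ‖u - w‖ := by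
      rw [hinner2, hBsplit]
      calc -((B u (w - u) - B U (w - u)) + (B u (u - U) - B U (u - U)))
          ≤ -(B u (w - u) - B U (w - u)) := by linarith
        _ ≤ M * ‖u - U‖ * ‖w - u‖ := habs
        _ = M * ‖u - U‖ * ‖u - w‖ := by rw [hnorm]
    nlinarith [hsplit, hcs, h2]
  have := mul_le_mul_iff_of_pos_right hpos |>.mp (by nlinarith [key] : ‖u - U‖ * ‖u - U‖ ≤ ((1 + M) * ‖u - w‖) * ‖u - U‖)
  linarith
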